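/- For all reals η and ζ with 0 < ζ ≤ η/2 < 1/4 there exists n₀ ∈ ℕ such that the following holds for all n ≥ n₀. Let G be an n-vertex graph, and suppose there exist sets T ⊆ S ⊆ V(G) with |S| ≥ |T| ≥ n^{1−η} such that any two distinct vertices u, v ∈ S satisfy |N_G(u) ∩ N_G(v)| ≥ n^{1−ζ} + 1. Then there exists a subgraph G' ⊆ G with the following properties: (i) d_{G'}(v) ≥ n^{1−2ζ} for every v ∈ S; (ii) |M_{G,ζ}(e) ∩ T| ≥ n^{1−2η} for every edge e ∈ E(G'). -/

import Mathlib

/-- The edges `xy` and `zw` (with `{x,y}` and `{z,w}` disjoint) "form a `C₄`" via the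
connecting edges `yz, wx` or `yw, zx`. -/
def FormC4With {V : Type*} (G : SimpleGraph V) (x y z w : V) : Prop :=
  (G.Adj y z ∧ G.Adj w x) ∨ (G.Adj y w ∧ G.Adj z x)

/-- `M_{G,ζ}(xy)`: the set of vertices `z ∉ {x,y}` having at least `n^(1-ζ)` neighbours
`w ∉ {x,y}` such that the edges `xy` and `zw` form a `C₄` in `G`. -/
def Mpair {V : Type*} (ζ : ℝ) (n : ℕ) (G : SimpleGraph V) (x y : V) : Set V :=
  {z : V | z ≠ x ∧ z ≠ y ∧
    (n : ℝ) ^ (1 - ζ) ≤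
      (({w : V | w ≠ x ∧ w ≠ y ∧ G.Adj z w ∧ FormC4With G x y z w} : Set V).ncard : ℝ)}

/-- `M_{G,ζ}(e)` for an edge `e` given as an unordered pair. -/
def Medge {V : Type*} (ζ : ℝ) (n : ℕ) (G : SimpleGraph V) (e : Sym2 V) : Set V :=
  {z : V | ∃ x y : V, e = s(x, y) ∧ z ∈ Mpair ζ n G x y}

private lemma aux_event (c a b : ℝ) (hab : a < b) :
    ∀ᶠ n : ℕ in Filter.atTop, c * (n:ℝ)^a ≤ (n:ℝ)^b := by
  have h1 : Filter.Tendsto (fun n : ℕ => (n:ℝ)^(b-a)) Filter.atTop Filter.atTop :=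
    (tendsto_rpow_atTop (by linarith)).comp tendsto_natCast_atTop_atTop
  filter_upwards [h1.eventually_ge_atTop c, Filter.eventually_ge_atTop 1] with n hc hn1
  have hN : (1:ℝ) ≤ n := by exact_mod_cast hn1
  have hN0 : (0:ℝ) < n := by linarith
  calc c * (n:ℝ)^a ≤ (n:ℝ)^(b-a) * (n:ℝ)^a :=
        mul_le_mul_of_nonneg_right hc (Real.rpow_nonneg (le_of_lt hN0) a)
    _ = (n:ℝ)^b := by rw [← Real.rpow_add hN0]; ring_nf

private lemma ncard_le_diff {n : ℕ} (A : Set (Fin n)) (v : Fin n) :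
    A.ncard ≤ (A \ {v}).ncard + 1 := by
  calc A.ncard ≤ (insert v (A \ {v})).ncard := by
        refine Set.ncard_le_ncard (fun x hx => ?_) (Set.toFinite _)
        by_cases hxv : x = v
        · exact hxv ▸ Set.mem_insert _ _
        · exact Set.mem_insert_of_mem _ ⟨hx, hxv⟩
    _ ≤ (A \ {v}).ncard + 1 := Set.ncard_insert_le _ _

private lemma mem_Mpair_of (ζ : ℝ) (n : ℕ) (G : SimpleGraph (Fin n)) (u v z : Fin n)
    (hzu : z ≠ u) (hzv : G.Adj z v)
    (hcod : (n:ℝ)^(1-ζ) + 1 ≤ ((G.neighborSet z ∩ G.neighborSet u).ncard : ℝ)) :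
    z ∈ Mpair ζ n G u v := by
  refine ⟨hzu, G.ne_of_adj hzv, ?_⟩
  set A := G.neighborSet z ∩ G.neighborSet u with hA
  set W := {w : Fin n | w ≠ u ∧ w ≠ v ∧ G.Adj z w ∧ FormC4With G u v z w} with hW
  have hsub : A \ {v} ⊆ W := by
    rintro w ⟨⟨hwz, hwu⟩, hwv⟩
    simp only [Set.mem_singleton_iff] at hwv
    simp only [SimpleGraph.mem_neighborSet] at hwz hwu
    exact ⟨fun h => (G.ne_of_adj hwu) h.symm, hwv, hwz, Or.inl ⟨hzv.symm, hwu.symm⟩⟩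
  have h1 : A.ncard ≤ (A \ {v}).ncard + 1 := ncard_le_diff A v
  have h2 : (A \ {v}).ncard ≤ W.ncard := Set.ncard_le_ncard hsub (Set.toFinite _)
  have h3 : (A.ncard : ℝ) ≤ (W.ncard : ℝ) + 1 := by exact_mod_cast h1.trans (by omega)
  linarith

private lemma edge_bound (η ζ : ℝ) (n : ℕ) (G : SimpleGraph (Fin n)) (S T : Set (Fin n))
    (hTS : T ⊆ S)
    (hcod : ∀ u ∈ S, ∀ v ∈ S, u ≠ v →
      (n:ℝ)^(1-ζ) + 1 ≤ ((G.neighborSet u ∩ G.neighborSet v).ncard : ℝ))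
    (u w : Fin n) (huS : u ∈ S)
    (hcnt : (n:ℝ)^(1-2*η) + 1 ≤ ((T ∩ G.neighborSet w).ncard : ℝ)) :
    (n:ℝ)^(1-2*η) ≤ (((Mpair ζ n G u w) ∩ T).ncard : ℝ) := by
  set B := (T ∩ G.neighborSet w) \ {u} with hB
  have hsub : B ⊆ (Mpair ζ n G u w) ∩ T := by
    rintro z ⟨⟨hzT, hzw⟩, hzu⟩
    simp only [Set.mem_singleton_iff] at hzu
    simp only [SimpleGraph.mem_neighborSet] at hzw
    exact ⟨mem_Mpair_of ζ n G u w z hzu hzw.symm (hcod z (hTS hzT) u huS hzu), hzT⟩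
  have h1 : (T ∩ G.neighborSet w).ncard ≤ B.ncard + 1 := ncard_le_diff _ u
  have h2 : B.ncard ≤ ((Mpair ζ n G u w) ∩ T).ncard :=
    Set.ncard_le_ncard hsub (Set.toFinite _)
  have h3 : ((T ∩ G.neighborSet w).ncard : ℝ) ≤ (((Mpair ζ n G u w) ∩ T).ncard : ℝ) + 1 := by
    exact_mod_cast h1.trans (by omega)
  linarith

private def auxGraph {n : ℕ} (G : SimpleGraph (Fin n)) (S T : Set (Fin n)) (θ : ℝ) :
    SimpleGraph (Fin n) where
  Adj u w := G.Adj u w ∧ ((u ∈ S ∧ θ ≤ ((T ∩ G.neighborSet w).ncard : ℝ)) ∨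
    (w ∈ S ∧ θ ≤ ((T ∩ G.neighborSet u).ncard : ℝ)))
  symm := ⟨fun u w h => ⟨h.1.symm, h.2.symm⟩⟩
  loopless := ⟨fun u h => G.loopless.irrefl u h.1⟩

private lemma numeric_step (η ζ : ℝ) (n : ℕ) (t : ℝ)
    (F1 : 4 * (n:ℝ) ^ (2 - η - 2 * ζ) ≤ (n:ℝ) ^ (2 - η - ζ))
    (F2 : 4 * (n:ℝ) ^ (1 - ζ) ≤ (n:ℝ) ^ (2 - η - ζ))
    (F3 : 4 * (n:ℝ) ^ (2 - 2 * η) ≤ (n:ℝ) ^ (2 - η - ζ))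
    (F4' : 4 * (n:ℝ) ≤ (n:ℝ) ^ (2 - η - ζ))
    (ht1 : 1 ≤ t)
    (hmul : (n:ℝ) ^ (1 - η) * (n:ℝ) ^ (1 - ζ) - (n:ℝ) ^ (1 - η) * (n:ℝ) ^ (1 - 2 * ζ)
        ≤ t * (n:ℝ) ^ (1 - ζ) - t * (n:ℝ) ^ (1 - 2 * ζ))
    (id1 : (n:ℝ) ^ (1 - η) * (n:ℝ) ^ (1 - ζ) = (n:ℝ) ^ (2 - η - ζ))
    (id2 : (n:ℝ) ^ (1 - η) * (n:ℝ) ^ (1 - 2 * ζ) = (n:ℝ) ^ (2 - η - 2 * ζ))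
    (id3 : (n:ℝ) ^ (2 - 2 * η) = (n:ℝ) * (n:ℝ) ^ (1 - 2 * η)) :
    (n:ℝ) ^ (1 - 2 * ζ) * t + (n:ℝ) * ((n:ℝ) ^ (1 - 2 * η) + 1)
      ≤ (t - 1) * ((n:ℝ) ^ (1 - ζ) + 1) := by
  nlinarith [F1, F2, F3, F4', ht1, hmul, id1, id2, id3]

theorem stmt9 (η ζ : ℝ) (h0 : 0 < ζ) (h1 : ζ ≤ η / 2) (h2 : η / 2 < 1 / 4) :
    ∃ n₀ : ℕ, ∀ n : ℕ, n₀ ≤ n →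
      ∀ (G : SimpleGraph (Fin n)) (S T : Set (Fin n)), T ⊆ S →
        (n : ℝ) ^ (1 - η) ≤ (T.ncard : ℝ) → T.ncard ≤ S.ncard →
        (∀ u ∈ S, ∀ v ∈ S, u ≠ v →
          (n : ℝ) ^ (1 - ζ) + 1 ≤ (((G.neighborSet u) ∩ (G.neighborSet v)).ncard : ℝ)) →
        ∃ G' : SimpleGraph (Fin n), G' ≤ G ∧
          (∀ v ∈ S, (n : ℝ) ^ (1 - 2 * ζ) ≤ ((G'.neighborSet v).ncard : ℝ)) ∧
          (∀ e ∈ G'.edgeSet, (n : ℝ) ^ (1 - 2 * η) ≤ (((Medge ζ n G e) ∩ T).ncard : ℝ)) := by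
  classical
  have hζη : ζ < η := by linarith
  have hev : ∀ᶠ m : ℕ in Filter.atTop,
      4 * (m:ℝ)^(2-η-2*ζ) ≤ (m:ℝ)^(2-η-ζ) ∧ 4 * (m:ℝ)^(1-ζ) ≤ (m:ℝ)^(2-η-ζ) ∧
      4 * (m:ℝ)^(2-2*η) ≤ (m:ℝ)^(2-η-ζ) ∧ 4 * (m:ℝ)^(1:ℝ) ≤ (m:ℝ)^(2-η-ζ) ∧ 1 ≤ m := by
    filter_upwards [aux_event 4 (2-η-2*ζ) (2-η-ζ) (by linarith),
      aux_event 4 (1-ζ) (2-η-ζ) (by linarith),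
      aux_event 4 (2-2*η) (2-η-ζ) (by linarith),
      aux_event 4 1 (2-η-ζ) (by linarith),
      Filter.eventually_ge_atTop 1] with m a b c d e
    exact ⟨a, b, c, d, e⟩
  obtain ⟨n₀, hkey⟩ := Filter.eventually_atTop.mp hev
  refine ⟨n₀, fun n hn G S T hTS hT hTleS hcod => ?_⟩
  obtain ⟨F1, F2, F3, F4, hn1⟩ := hkey n hn
  have hN1 : (1:ℝ) ≤ (n:ℝ) := by exact_mod_cast hn1
  have hN0 : (0:ℝ) < (n:ℝ) := by linarith
  set θ : ℝ := (n:ℝ)^(1-2*η) + 1 with hθdef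
  have hθ0 : 0 < θ := by positivity
  refine ⟨auxGraph G S T θ, fun u w h => h.1, ?_, ?_⟩
  · -- degree condition
    intro v hv
    set T' : Finset (Fin n) := (Set.toFinite T).toFinset with hT'def
    set Nf : Fin n → Finset (Fin n) := fun w => (Set.toFinite (G.neighborSet w)).toFinset
      with hNfdef
    have hcnt_eq : ∀ w : Fin n, (T ∩ G.neighborSet w).ncard = (T' ∩ Nf w).card := by
      intro w
      rw [Set.ncard_eq_toFinset_card _ (Set.toFinite _)]
      congr 1
      ext z
      simp only [Finset.mem_inter, Set.Finite.mem_toFinset, Set.mem_inter_iff, hT'def, hNfdef]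
    have hinter : ∀ a b : Fin n,
        (G.neighborSet a ∩ G.neighborSet b).ncard = (Nf a ∩ Nf b).card := by
      intro a b
      rw [Set.ncard_eq_toFinset_card _ (Set.toFinite _)]
      congr 1
      ext z
      simp only [Finset.mem_inter, Set.Finite.mem_toFinset, Set.mem_inter_iff, hNfdef]
    have hdc : ∑ w ∈ Nf v, (T' ∩ Nf w).card = ∑ z ∈ T', (Nf z ∩ Nf v).card := by
      have e1 : ∀ w, T' ∩ Nf w = T'.filter (fun z => G.Adj z w) := by
        intro w; ext z
        simp [hT'def, hNfdef, Set.Finite.mem_toFinset, SimpleGraph.adj_comm]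
      have e2 : ∀ z, Nf z ∩ Nf v = (Nf v).filter (fun w => G.Adj z w) := by
        intro z; ext w
        simp only [Finset.mem_inter, Finset.mem_filter, hNfdef, Set.Finite.mem_toFinset,
          SimpleGraph.mem_neighborSet]
        tauto
      calc ∑ w ∈ Nf v, (T' ∩ Nf w).card
          = ∑ w ∈ Nf v, ∑ z ∈ T', if G.Adj z w then 1 else 0 := by
            refine Finset.sum_congr rfl fun w _ => ?_
            rw [e1 w, Finset.card_filter]
        _ = ∑ z ∈ T', ∑ w ∈ Nf v, if G.Adj z w then 1 else 0 := Finset.sum_comm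
        _ = ∑ z ∈ T', (Nf z ∩ Nf v).card := by
            refine Finset.sum_congr rfl fun z _ => ?_
            rw [e2 z, Finset.card_filter]
    set t : ℝ := (T'.card : ℝ) with htdef
    have hTt : (n:ℝ)^(1-η) ≤ t := by
      rw [htdef]
      have : T.ncard = T'.card := Set.ncard_eq_toFinset_card _ (Set.toFinite T)
      rw [← this]; exact hT
    have ht1 : (1:ℝ) ≤ t := by
      refine le_trans ?_ hTt
      have h9 := Real.rpow_le_rpow_of_exponent_le hN1 (show (0:ℝ) ≤ 1 - η by linarith)
      rwa [Real.rpow_zero] at h9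
    have htn : t ≤ (n:ℝ) := by
      rw [htdef]
      have h9 : T'.card ≤ n := by simpa using Finset.card_le_univ T'
      exact_mod_cast h9
    -- lower bound
    have hlow : (t - 1) * ((n:ℝ)^(1-ζ) + 1) ≤ ∑ z ∈ T', ((Nf z ∩ Nf v).card : ℝ) := by
      have hbound : ∀ z ∈ T'.erase v, ((n:ℝ)^(1-ζ) + 1) ≤ ((Nf z ∩ Nf v).card : ℝ) := by
        intro z hz
        have hzv : z ≠ v := Finset.ne_of_mem_erase hz
        have hzT : z ∈ T := (Set.Finite.mem_toFinset _).mp (Finset.mem_of_mem_erase hz)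
        have h := hcod z (hTS hzT) v hv hzv
        rwa [hinter z v] at h
      have h5 : ((T'.erase v).card : ℝ) * ((n:ℝ)^(1-ζ) + 1)
          ≤ ∑ z ∈ T'.erase v, ((Nf z ∩ Nf v).card : ℝ) := by
        have := Finset.card_nsmul_le_sum (T'.erase v)
          (fun z => ((Nf z ∩ Nf v).card : ℝ)) _ hbound
        rwa [nsmul_eq_mul] at this
      have h6 : ∑ z ∈ T'.erase v, ((Nf z ∩ Nf v).card : ℝ)
          ≤ ∑ z ∈ T', ((Nf z ∩ Nf v).card : ℝ) :=
        Finset.sum_le_sum_of_subset_of_nonneg (Finset.erase_subset _ _)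
          (fun _ _ _ => by positivity)
      have h7 : t - 1 ≤ ((T'.erase v).card : ℝ) := by
        have hp : T'.card ≤ (T'.erase v).card + 1 := by
          have := Finset.pred_card_le_card_erase (s := T') (a := v)
          omega
        rw [htdef]
        have : (T'.card : ℝ) ≤ ((T'.erase v).card : ℝ) + 1 := by exact_mod_cast hp
        linarith
      have h8 : (0:ℝ) ≤ (n:ℝ)^(1-ζ) + 1 := by positivity
      calc (t - 1) * ((n:ℝ)^(1-ζ) + 1)
          ≤ ((T'.erase v).card : ℝ) * ((n:ℝ)^(1-ζ) + 1) :=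
            mul_le_mul_of_nonneg_right h7 h8
        _ ≤ ∑ z ∈ T'.erase v, ((Nf z ∩ Nf v).card : ℝ) := h5
        _ ≤ ∑ z ∈ T', ((Nf z ∩ Nf v).card : ℝ) := h6
    -- upper bound
    set P : Fin n → Prop := fun w => θ ≤ ((T' ∩ Nf w).card : ℝ) with hPdef
    set Df : Finset (Fin n) := (Nf v).filter P with hDfdef
    have hup : ∑ w ∈ Nf v, ((T' ∩ Nf w).card : ℝ) ≤ (Df.card : ℝ) * t + (n:ℝ) * θ := by
      rw [← Finset.sum_filter_add_sum_filter_not (Nf v) P]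
      have hup1 : ∑ w ∈ Df, ((T' ∩ Nf w).card : ℝ) ≤ (Df.card : ℝ) * t := by
        have hb : ∀ w ∈ Df, ((T' ∩ Nf w).card : ℝ) ≤ t := by
          intro w _
          rw [htdef]
          exact_mod_cast Finset.card_le_card (Finset.inter_subset_left)
        have := Finset.sum_le_card_nsmul Df _ t hb
        rwa [nsmul_eq_mul] at this
      have hup2 : ∑ w ∈ (Nf v).filter (fun w => ¬ P w), ((T' ∩ Nf w).card : ℝ)
          ≤ (n:ℝ) * θ := by
        have hb : ∀ w ∈ (Nf v).filter (fun w => ¬ P w), ((T' ∩ Nf w).card : ℝ) ≤ θ :=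
          fun w hw => le_of_not_ge (Finset.mem_filter.mp hw).2
        have hs := Finset.sum_le_card_nsmul _ _ θ hb
        rw [nsmul_eq_mul] at hs
        refine hs.trans ?_
        have hcard : ((((Nf v).filter (fun w => ¬ P w)).card : ℝ)) ≤ (n:ℝ) := by
          have h9 : ((Nf v).filter (fun w => ¬ P w)).card ≤ n := by
            simpa using (Finset.card_filter_le (Nf v) _).trans (Finset.card_le_univ (Nf v))
          exact_mod_cast h9
        exact mul_le_mul_of_nonneg_right hcard (le_of_lt hθ0)
      exact add_le_add hup1 hup2
    have hdcR : ∑ w ∈ Nf v, ((T' ∩ Nf w).card : ℝ) = ∑ z ∈ T', ((Nf z ∩ Nf v).card : ℝ) := by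
      exact_mod_cast hdc
    have hmain : (t - 1) * ((n:ℝ)^(1-ζ) + 1) ≤ (Df.card : ℝ) * t + (n:ℝ) * θ := by
      rw [← hdcR] at hlow; linarith
    -- numeric part
    have id1 : (n:ℝ)^(1-η) * (n:ℝ)^(1-ζ) = (n:ℝ)^(2-η-ζ) := by
      rw [← Real.rpow_add hN0]; congr 1; ring
    have id2 : (n:ℝ)^(1-η) * (n:ℝ)^(1-2*ζ) = (n:ℝ)^(2-η-2*ζ) := by
      rw [← Real.rpow_add hN0]; congr 1; ring
    have id3 : (n:ℝ)^(2-2*η) = (n:ℝ) * (n:ℝ)^(1-2*η) := by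
      rw [show (2-2*η) = 1 + (1-2*η) by ring, Real.rpow_add hN0, Real.rpow_one]
    have F4' : 4 * (n:ℝ) ≤ (n:ℝ)^(2-η-ζ) := by rwa [Real.rpow_one] at F4
    have F5 : (n:ℝ)^(1-2*ζ) ≤ (n:ℝ)^(1-ζ) :=
      Real.rpow_le_rpow_of_exponent_le hN1 (by linarith)
    have hmul : (n:ℝ)^(1-η) * ((n:ℝ)^(1-ζ) - (n:ℝ)^(1-2*ζ))
        ≤ t * ((n:ℝ)^(1-ζ) - (n:ℝ)^(1-2*ζ)) :=
      mul_le_mul_of_nonneg_right hTt (by linarith)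
    rw [mul_sub, mul_sub] at hmul
    have hnum : (n:ℝ)^(1-2*ζ) * t + (n:ℝ) * θ ≤ (t - 1) * ((n:ℝ)^(1-ζ) + 1) := by
      rw [hθdef]
      exact numeric_step η ζ n t F1 F2 F3 F4' ht1 hmul id1 id2 id3
    have hfinal : (n:ℝ)^(1-2*ζ) * t ≤ (Df.card : ℝ) * t := le_of_add_le_add_right (hnum.trans hmain)
    have hD : (n:ℝ)^(1-2*ζ) ≤ (Df.card : ℝ) :=
      le_of_mul_le_mul_right hfinal (by linarith)
    -- from Df to neighborSet
    refine hD.trans ?_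
    have hDsub : (Df : Set (Fin n)) ⊆ (auxGraph G S T θ).neighborSet v := by
      intro w hw
      simp only [Finset.coe_filter, Set.mem_setOf_eq, hDfdef, Finset.mem_filter] at hw
      obtain ⟨hw1, hw2⟩ := hw
      have hadj : G.Adj v w := (Set.Finite.mem_toFinset _).mp hw1
      have hcard : θ ≤ ((T ∩ G.neighborSet w).ncard : ℝ) := by
        rw [hcnt_eq w]; exact hw2
      exact ⟨hadj, Or.inl ⟨hv, hcard⟩⟩
    have := Set.ncard_le_ncard hDsub (Set.toFinite _)
    rw [Set.ncard_coe_finset] at this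
    exact_mod_cast this
  · -- edge condition
    intro e he
    induction e using Sym2.ind with
    | _ u w =>
      rw [SimpleGraph.mem_edgeSet] at he
      obtain ⟨hadj, hcase⟩ := he
      rcases hcase with ⟨huS, hcnt⟩ | ⟨hwS, hcnt⟩
      · rw [hθdef] at hcnt
        have hb := edge_bound η ζ n G S T hTS hcod u w huS hcnt
        refine hb.trans (Nat.cast_le.mpr (Set.ncard_le_ncard ?_ (Set.toFinite _)))
        exact Set.inter_subset_inter_left T (fun z hz => ⟨u, w, rfl, hz⟩)
      · rw [hθdef] at hcnt
        have hb := edge_bound η ζ n G S T hTS hcod w u hwS hcnt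
        refine hb.trans (Nat.cast_le.mpr (Set.ncard_le_ncard ?_ (Set.toFinite _)))
        exact Set.inter_subset_inter_left T (fun z hz => ⟨w, u, Sym2.eq_swap, hz⟩)
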